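/- Let (Ω, ℱ, P) be a probability space, let Z and G be integrable real random variables with Z ≤ G almost surely, let S : Ω → {0, 1} be measurable with P(S = 0) = ε, and let q be a real number with P(G > q) = ε. Then E[(1 − S)·Z] ≤ E[G·𝟙{G > q}]. -/

import Mathlib

open MeasureTheory
open scoped ENNReal

/-- Optimization step for the sharp upper bound in the X-mixture model: if `Z ≤ G` a.s.,
`S` takes values in `{0,1}` with `P(S = 0) = ε`, and `q` satisfies `P(G > q) = ε`, then
`E[(1 − S)·Z] ≤ E[G·𝟙{G > q}]`. -/
theorem upper_bound_optimization_step
    {Ω : Type*} [MeasurableSpace Ω] (P : Measure Ω) [IsProbabilityMeasure P]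
    (Z G : Ω → ℝ) (hZ : Integrable Z P) (hG : Integrable G P)
    (hZG : ∀ᵐ ω ∂P, Z ω ≤ G ω)
    (S : Ω → ℝ) (hS : Measurable S) (hS01 : ∀ ω, S ω = 0 ∨ S ω = 1)
    (ε : ℝ≥0∞) (hSε : P {ω | S ω = 0} = ε)
    (q : ℝ) (hq : P {ω | G ω > q} = ε) :
    ∫ ω, (1 - S ω) * Z ω ∂P ≤ ∫ ω, Set.indicator {ω | G ω > q} G ω ∂P := by
  classical
  -- measurable version of G
  set G' : Ω → ℝ := hG.1.mk G with hG'def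
  have hG'sm : StronglyMeasurable G' := hG.1.stronglyMeasurable_mk
  have hGG' : G =ᵐ[P] G' := hG.1.ae_eq_mk
  have hG'int : Integrable G' P := hG.congr hGG'
  have hZG' : ∀ᵐ ω ∂P, Z ω ≤ G' ω := by
    filter_upwards [hZG, hGG'] with ω h1 h2; rw [← h2]; exact h1
  set A : Set Ω := {ω | S ω = 0} with hAdef
  have hA : MeasurableSet A := hS (measurableSet_singleton 0)
  set B : Set Ω := {ω | G' ω > q} with hBdef
  have hB : MeasurableSet B := measurableSet_lt measurable_const hG'sm.measurable
  have hBmeas : P B = ε := by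
    rw [← hq]
    refine measure_congr ?_
    filter_upwards [hGG'] with ω h
    show (G' ω > q) = (G ω > q)
    rw [h]
  -- LHS rewrite
  have hLHS : ∫ ω, (1 - S ω) * Z ω ∂P = ∫ ω in A, Z ω ∂P := by
    rw [← integral_indicator hA]
    refine integral_congr_ae (Filter.Eventually.of_forall fun ω => ?_)
    rcases hS01 ω with h | h
    · have : ω ∈ A := h
      simp [Set.indicator_of_mem this, h]
    · have : ω ∉ A := by simp [hAdef, h]
      simp [Set.indicator_of_notMem this, h]
  -- RHS rewrite
  have hRHS : ∫ ω, Set.indicator {ω | G ω > q} G ω ∂P = ∫ ω in B, G' ω ∂P := by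
    rw [← integral_indicator hB]
    refine integral_congr_ae ?_
    filter_upwards [hGG'] with ω h
    by_cases hm : G ω > q
    · have hm' : ω ∈ B := by simpa [hBdef, Set.mem_setOf_eq, ← h] using hm
      simp only [Set.indicator_apply, Set.mem_setOf_eq, hm, if_true, h]
      have hq' : G' ω > q := hm'
      rw [if_pos hq', if_pos hm']
    · have hm' : ω ∉ B := by simpa [hBdef, Set.mem_setOf_eq, ← h] using hm
      simp only [Set.indicator_apply, Set.mem_setOf_eq, hm, h]
      have hq' : ¬ G' ω > q := hm'
      rw [if_neg hq', if_neg hm']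
  rw [hLHS, hRHS]
  have step1 : ∫ ω in A, Z ω ∂P ≤ ∫ ω in A, G' ω ∂P :=
    setIntegral_mono_ae hZ.integrableOn hG'int.integrableOn hZG'
  refine step1.trans ?_
  -- split over B
  have hsplitA : ∫ ω in A ∩ B, G' ω ∂P + ∫ ω in A \ B, G' ω ∂P = ∫ ω in A, G' ω ∂P :=
    integral_inter_add_diff hB hG'int.integrableOn
  have hsplitB : ∫ ω in B ∩ A, G' ω ∂P + ∫ ω in B \ A, G' ω ∂P = ∫ ω in B, G' ω ∂P :=
    integral_inter_add_diff hA hG'int.integrableOn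
  -- measures of the differences agree
  have hmeq : P (A \ B) = P (B \ A) := by
    have h1 : P (A ∩ B) + P (A \ B) = P A := measure_inter_add_diff A hB
    have h2 : P (B ∩ A) + P (B \ A) = P B := measure_inter_add_diff B hA
    rw [Set.inter_comm] at h2
    have hPA : P A = P B := by rw [hSε, hBmeas]
    have hfin : P (A ∩ B) ≠ ⊤ := measure_ne_top _ _
    have : P (A ∩ B) + P (A \ B) = P (A ∩ B) + P (B \ A) := by
      rw [h1, h2, hPA]
    exact (ENNReal.add_right_inj hfin).mp this
  -- bound the difference integrals by q times the measure
  have hbound1 : ∫ ω in A \ B, G' ω ∂P ≤ q * (P (A \ B)).toReal := by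
    have h1 : ∫ ω in A \ B, G' ω ∂P ≤ ∫ _ω in A \ B, q ∂P :=
      setIntegral_mono_on hG'int.integrableOn
        (integrableOn_const (measure_ne_top P (A \ B)))
        (hA.diff hB) (fun ω hω => le_of_not_gt hω.2)
    rw [setIntegral_const, smul_eq_mul, mul_comm] at h1
    exact h1
  have hbound2 : q * (P (B \ A)).toReal ≤ ∫ ω in B \ A, G' ω ∂P := by
    have h1 : ∫ _ω in B \ A, q ∂P ≤ ∫ ω in B \ A, G' ω ∂P :=
      setIntegral_mono_on
        (integrableOn_const (measure_ne_top P (B \ A)))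
        hG'int.integrableOn (hB.diff hA) (fun ω hω => le_of_lt hω.1)
    rw [setIntegral_const, smul_eq_mul, mul_comm] at h1
    exact h1
  calc ∫ ω in A, G' ω ∂P
      = ∫ ω in A ∩ B, G' ω ∂P + ∫ ω in A \ B, G' ω ∂P := hsplitA.symm
    _ ≤ ∫ ω in A ∩ B, G' ω ∂P + ∫ ω in B \ A, G' ω ∂P := by
        refine add_le_add le_rfl ?_
        calc ∫ ω in A \ B, G' ω ∂P ≤ q * (P (A \ B)).toReal := hbound1
          _ = q * (P (B \ A)).toReal := by rw [hmeq]
          _ ≤ ∫ ω in B \ A, G' ω ∂P := hbound2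
    _ = ∫ ω in B, G' ω ∂P := by rw [Set.inter_comm]; exact hsplitB
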